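/- arXiv:1011.0950 — 3 statements merged into one kernel-verified Lean document; each statement's English description precedes it below -/
import Mathlib

section
/- The sequential matching procedure checkSeq returns true on a list of client classes [c₁, ..., c_k] if and only if the list matches in the server ontology, i.e., if and only if there exist server classes s₁, ..., s_k with m cᵢ = some sᵢ for all i and sub sᵢ s_{i+1} for all i < k. (Correctness of the specialization-sequence matching step of the Check-Consistency algorithm: a Type-1 mismatch is reported exactly when no matching chain of equivalent server classes exists.) -/
/-- A specialization sequence `cs = [c₁, ..., c_k]` of client classes *matches* in the
server ontology if there exist server classes `s₁, ..., s_k` with `m cᵢ = some sᵢ` for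
all `i` and `sub sᵢ s_{i+1}` for all `i < k`. -/
def Matches {C S : Type*} (sub : S → S → Prop) (m : C → Option S) (cs : List C) : Prop :=
  ∃ ss : List S, List.Forall₂ (fun c s => m c = some s) cs ss ∧ ss.Chain' sub

/-- Auxiliary procedure of the sequential matcher: `goSeq sub m s cs` checks the tail
`cs` of a specialization sequence, where `s` is the server class matched so far. -/
def goSeq {C S : Type*} (sub : S → S → Prop) [DecidableRel sub] (m : C → Option S) :
    S → List C → Bool
  | _, [] => true
  | s, c' :: cs' =>
    match m c' with
    | none => false
    | some s' => decide (sub s s') && goSeq sub m s' cs'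

/-- The sequential matching procedure of the Check-Consistency algorithm. -/
def checkSeq {C S : Type*} (sub : S → S → Prop) [DecidableRel sub] (m : C → Option S) :
    List C → Bool
  | [] => true
  | c :: cs =>
    match m c with
    | none => false
    | some s => goSeq sub m s cs

/-- Correctness of the specialization-sequence matching step of Check-Consistency:
`checkSeq` returns `true` on a list of client classes iff the list matches in the
server ontology. -/
theorem checkSeq_eq_true_iff_matches {C S : Type*} (sub : S → S → Prop)
    [DecidableRel sub] (m : C → Option S) (cs : List C) :
    checkSeq sub m cs = true ↔ Matches sub m cs := by
  have go : ∀ (cs : List C) (s : S), goSeq sub m s cs = true ↔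
      ∃ ss : List S, List.Forall₂ (fun c s => m c = some s) cs ss ∧ List.Chain sub s ss := by
    intro cs
    induction cs with
    | nil =>
      intro s
      simp [goSeq]
      exact List.IsChain.singleton s
    | cons c cs ih =>
      intro s
      simp only [goSeq]
      cases h : m c with
      | none =>
        simp only [Bool.false_eq_true, false_iff]
        rintro ⟨ss, hf, hc⟩
        rcases hf with _ | ⟨hms, _⟩
        simp_all
      | some s' =>
        rw [Bool.and_eq_true, decide_eq_true_iff, ih s']
        constructor
        · rintro ⟨hs, ss, hf, hc⟩
          exact ⟨s' :: ss, List.Forall₂.cons h hf, List.Chain.cons hs hc⟩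
        · rintro ⟨ss, hf, hc⟩
          rcases hf with _ | @⟨_, b, _, _, hms, hf⟩
          cases hc with
          | cons_cons hs hc =>
            rw [h] at hms; cases hms
            exact ⟨hs, _, hf, hc⟩
  cases cs with
  | nil =>
    simp [checkSeq, Matches]
    exact List.IsChain.nil
  | cons c cs =>
    simp only [checkSeq, Matches]
    cases h : m c with
    | none =>
      simp only [Bool.false_eq_true, false_iff]
      rintro ⟨ss, hf, hc⟩
      rcases hf with _ | ⟨hms, _⟩
      simp_all
    | some s =>
      rw [go]
      constructor
      · rintro ⟨ss, hf, hc⟩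
        exact ⟨s :: ss, List.Forall₂.cons h hf, hc⟩
      · rintro ⟨ss, hf, hc⟩
        rcases hf with _ | @⟨_, b, _, _, hms, hf⟩
        rw [h] at hms; cases hms
        exact ⟨_, hf, hc⟩
end

section
/- [Projection pushing through natural join] Let R₁ be a relation over X₁ and R₂ a relation over X₂, and let Y ⊆ X₁ ∪ X₂. Then π_Y(R₁ ⋈ R₂) = π_Y( π_{X₁ ∩ (Y ∪ X₂)}(R₁) ⋈ R₂ ). (This identity justifies the staged computation of assignable sets in the verification algorithm, where each recursive VerifyConflict call stores only the projection of its join onto its own variable set before joining with later relations.) -/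
/-- A tuple over a finite variable set `X` assigns a value to each variable in `X`. -/
def Tuple (V : Type*) {ι : Type*} (X : Finset ι) : Type _ := ↥X → V

/-- Restriction of a tuple over `X` to a subset `Y ⊆ X`. -/
def Tuple.restrict {ι V : Type*} {X Y : Finset ι} (h : Y ⊆ X) (t : Tuple V X) :
    Tuple V Y :=
  fun y => t ⟨y.1, h y.2⟩

/-- Restriction of a valuation `f : ι → V` to a tuple over `X`. -/
def restrictVal {ι V : Type*} (X : Finset ι) (f : ι → V) : Tuple V X :=
  fun x => f x.1

/-- The cylinder of a relation `R` over `X`: the set of valuations whose restriction to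
`X` lies in `R`. -/
def Cyl {ι V : Type*} {X : Finset ι} (R : Set (Tuple V X)) : Set (ι → V) :=
  {f | restrictVal X f ∈ R}

/-- The natural join of a relation over `X₁` with a relation over `X₂`: the relation
over `X₁ ∪ X₂` consisting of the tuples whose restriction to `X₁` lies in `R₁` and
whose restriction to `X₂` lies in `R₂`. -/
def natJoin {ι V : Type*} [DecidableEq ι] {X₁ X₂ : Finset ι} (R₁ : Set (Tuple V X₁))
    (R₂ : Set (Tuple V X₂)) : Set (Tuple V (X₁ ∪ X₂)) :=
  {t | t.restrict Finset.subset_union_left ∈ R₁ ∧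
       t.restrict Finset.subset_union_right ∈ R₂}

/-- The projection of a relation `R` over `X` to a subset `Y ⊆ X`: the set of
restrictions to `Y` of the tuples of `R`. -/
def proj {ι V : Type*} {X : Finset ι} (Y : Finset ι) (h : Y ⊆ X)
    (R : Set (Tuple V X)) : Set (Tuple V Y) :=
  {u | ∃ t ∈ R, t.restrict h = u}

/-- The selection of a relation `R` over `X` by a predicate `P` on tuples over `X`. -/
def sel {ι V : Type*} {X : Finset ι} (P : Tuple V X → Prop) (R : Set (Tuple V X)) :
    Set (Tuple V X) :=
  {t ∈ R | P t}

/-- A relation together with its variable set. -/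
structure DBRel (ι V : Type*) where
  X : Finset ι
  R : Set (Tuple V X)

/-- Binary natural join of bundled relations. -/
def DBRel.join {ι V : Type*} [DecidableEq ι] (A B : DBRel ι V) : DBRel ι V :=
  ⟨A.X ∪ B.X, natJoin A.R B.R⟩

/-- The iterated (left-nested) binary natural join `((R₁ ⋈ R₂) ⋈ ⋯) ⋈ R_k` of the
relations `R₁ :: [R₂, ..., R_k]`. -/
def multiJoin {ι V : Type*} [DecidableEq ι] (A : DBRel ι V) (l : List (DBRel ι V)) :
    DBRel ι V :=
  l.foldl DBRel.join A

/-- Projection pushing through natural join: for `Y ⊆ X₁ ∪ X₂`,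
`π_Y(R₁ ⋈ R₂) = π_Y( π_{X₁ ∩ (Y ∪ X₂)}(R₁) ⋈ R₂ )`. This identity justifies the staged
computation of assignable sets in the verification algorithm, where each recursive
`VerifyConflict` call stores only the projection of its join onto its own variable set
before joining with later relations. -/
theorem proj_push_natJoin {ι V : Type*} [DecidableEq ι] {X₁ X₂ Y : Finset ι}
    (R₁ : Set (Tuple V X₁)) (R₂ : Set (Tuple V X₂)) (hY : Y ⊆ X₁ ∪ X₂) :
    proj Y hY (natJoin R₁ R₂) =
      proj Y
        (by
          intro x hx
          rcases Finset.mem_union.mp (hY hx) with h | h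
          · exact Finset.mem_union_left _
              (Finset.mem_inter.mpr ⟨h, Finset.mem_union_left _ hx⟩)
          · exact Finset.mem_union_right _ h)
        (natJoin (proj (X₁ ∩ (Y ∪ X₂)) Finset.inter_subset_left R₁) R₂) := by
  have hZ : (X₁ ∩ (Y ∪ X₂)) ∪ X₂ ⊆ X₁ ∪ X₂ :=
    Finset.union_subset (Finset.inter_subset_left.trans Finset.subset_union_left)
      Finset.subset_union_right
  ext u
  constructor
  · rintro ⟨t, ⟨h1, h2⟩, rfl⟩
    exact ⟨t.restrict hZ, ⟨⟨t.restrict Finset.subset_union_left, h1, rfl⟩, h2⟩, rfl⟩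
  · rintro ⟨s, ⟨⟨r, hr, hrs⟩, h2⟩, rfl⟩
    set t : Tuple V (X₁ ∪ X₂) := fun x =>
      if h : x.1 ∈ X₂ then s ⟨x.1, Finset.mem_union_right _ h⟩
      else r ⟨x.1, (Finset.mem_union.mp x.2).resolve_right h⟩ with ht
    have e1 : Tuple.restrict Finset.subset_union_left t = r := by
      funext x
      simp only [ht, Tuple.restrict]
      split
      · rename_i h
        have hx : x.1 ∈ X₁ ∩ (Y ∪ X₂) :=
          Finset.mem_inter.mpr ⟨x.2, Finset.mem_union_right _ h⟩
        have := congrFun hrs ⟨x.1, hx⟩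
        simp only [Tuple.restrict] at this
        exact this.symm
      · rfl
    have e2 : Tuple.restrict Finset.subset_union_right t
        = Tuple.restrict (X := X₁ ∩ (Y ∪ X₂) ∪ X₂) Finset.subset_union_right s := by
      funext x
      simp only [ht, Tuple.restrict]
      split
      · rfl
      · exact absurd x.2 (by assumption)
    refine ⟨t, ⟨?_, ?_⟩, ?_⟩
    · rw [e1]; exact hr
    · rw [e2]; exact h2
    · funext y
      simp only [ht, Tuple.restrict]
      split
      · rfl
      · rename_i h
        have hy : y.1 ∈ X₁ ∩ (Y ∪ X₂) :=
          Finset.mem_inter.mpr ⟨(Finset.mem_union.mp (hY y.2)).resolve_right h,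
            Finset.mem_union_left _ y.2⟩
        have := congrFun hrs ⟨y.1, hy⟩
        simp only [Tuple.restrict] at this
        exact this
end

section
/- [Correctness of GenerateAssignableSet] Assume V is nonempty. Let R₁, ..., R_k be relations over finite variable sets X₁, ..., X_k and let v ⊆ X₁ ∪ ⋯ ∪ X_k. Then a tuple u over v belongs to the projection π_v(R₁ ⋈ ⋯ ⋈ R_k) if and only if there exists a valuation f : ι → V with f|v = u and f|Xⱼ ∈ Rⱼ for every j. In particular, π_v(R₁ ⋈ ⋯ ⋈ R_k) is nonempty if and only if there exists a valuation f with f|Xⱼ ∈ Rⱼ for every j; i.e., the AssignableSet of the variable set v computed by relational algebra is exactly the set of correct instantiations of v under the conjunctive evaluation semantics. -/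
lemma restrict_restrictVal {ι V : Type*} {X Y : Finset ι} (h : Y ⊆ X) (f : ι → V) :
    Tuple.restrict h (restrictVal X f) = restrictVal Y f := rfl

lemma exists_extension {ι V : Type*} [Nonempty V] [DecidableEq ι] {X : Finset ι}
    (t : Tuple V X) : ∃ f : ι → V, restrictVal X f = t := by
  classical
  refine ⟨fun x => if h : x ∈ X then t ⟨x, h⟩ else Classical.arbitrary V, ?_⟩
  funext x
  simp [restrictVal, x.2]

lemma multiJoin_mem {ι V : Type*} [DecidableEq ι] (A : DBRel ι V) (l : List (DBRel ι V))
    (f : ι → V) :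
    restrictVal (multiJoin A l).X f ∈ (multiJoin A l).R ↔
      ∀ B ∈ A :: l, restrictVal B.X f ∈ B.R := by
  induction l generalizing A with
  | nil => simp [multiJoin]; exact Iff.rfl
  | cons C l ih =>
    have : multiJoin A (C :: l) = multiJoin (A.join C) l := rfl
    rw [this, ih]
    constructor
    · rintro h B hB
      simp only [List.mem_cons] at hB
      rcases hB with hB | hB | hB
      · subst hB
        exact (h _ List.mem_cons_self).1
      · subst hB
        exact (h _ List.mem_cons_self).2
      · exact h B (List.mem_cons_of_mem _ hB)
    · rintro h B hB
      simp only [List.mem_cons] at hB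
      rcases hB with hB | hB
      · subst hB
        exact ⟨h A (by simp), h C (by simp)⟩
      · exact h B (by simp [hB])

/-- Correctness of `GenerateAssignableSet`: for relations `R₁, ..., R_k` (bundled as
`A :: l`) and `v ⊆ X₁ ∪ ⋯ ∪ X_k`, a tuple `u` over `v` belongs to
`π_v(R₁ ⋈ ⋯ ⋈ R_k)` iff there is a valuation `f : ι → V` with `f|v = u` and
`f|Xⱼ ∈ Rⱼ` for every `j`; in particular `π_v(R₁ ⋈ ⋯ ⋈ R_k)` is nonempty iff some
valuation restricts into every `Rⱼ`, i.e. the AssignableSet computed by relational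
algebra is exactly the set of correct instantiations of `v` under the conjunctive
evaluation semantics. -/
theorem generateAssignableSet_correct {ι V : Type*} [DecidableEq ι] [Nonempty V]
    (A : DBRel ι V) (l : List (DBRel ι V)) (v : Finset ι)
    (hv : v ⊆ (multiJoin A l).X) :
    (∀ u : Tuple V v,
      u ∈ proj v hv (multiJoin A l).R ↔
        ∃ f : ι → V, restrictVal v f = u ∧ ∀ B ∈ A :: l, restrictVal B.X f ∈ B.R) ∧
    ((proj v hv (multiJoin A l).R).Nonempty ↔
      ∃ f : ι → V, ∀ B ∈ A :: l, restrictVal B.X f ∈ B.R) := by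
  have main : ∀ u : Tuple V v,
      u ∈ proj v hv (multiJoin A l).R ↔
        ∃ f : ι → V, restrictVal v f = u ∧ ∀ B ∈ A :: l, restrictVal B.X f ∈ B.R := by
    intro u
    constructor
    · rintro ⟨t, ht, rfl⟩
      obtain ⟨f, rfl⟩ := exists_extension t
      exact ⟨f, rfl, (multiJoin_mem A l f).1 ht⟩
    · rintro ⟨f, rfl, hall⟩
      exact ⟨restrictVal _ f, (multiJoin_mem A l f).2 hall, rfl⟩
  refine ⟨main, ?_⟩
  constructor
  · rintro ⟨u, hu⟩
    obtain ⟨f, _, hall⟩ := (main u).1 hu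
    exact ⟨f, hall⟩
  · rintro ⟨f, hall⟩
    exact ⟨restrictVal v f, (main _).2 ⟨f, rfl, hall⟩⟩
end
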